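/- Let A, X ∈ ℂ^{m×n} and W ∈ ℂ^{n×m}. The following are equivalent: (i) X is a {1',2',4'}-inverse of A; (ii) rank(WAW) = rank(A), XWAWX = X, and the column space (range) of X equals the column space of (AW)*; (iii) rank(WAW) = rank(A), AWXWA = A, and the column space of X equals the column space of (AW)*. -/

import Mathlib

open Matrix

section aux

private lemma range_mul_le' {k l p : ℕ} (M : Matrix (Fin k) (Fin l) ℂ)
    (N : Matrix (Fin l) (Fin p) ℂ) :
    LinearMap.range (M * N).mulVecLin ≤ LinearMap.range M.mulVecLin := by
  rw [Matrix.mulVecLin_mul]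
  exact LinearMap.range_comp_le_range _ _

private lemma exists_mul_eq_of_range_le' {k l p : ℕ} {M : Matrix (Fin k) (Fin l) ℂ}
    {N : Matrix (Fin k) (Fin p) ℂ}
    (h : LinearMap.range N.mulVecLin ≤ LinearMap.range M.mulVecLin) :
    ∃ C : Matrix (Fin l) (Fin p) ℂ, M * C = N := by
  have hc : ∀ j, ∃ c : Fin l → ℂ, M.mulVec c = fun i => N i j := by
    intro j
    have hmem : (fun i => N i j) ∈ LinearMap.range N.mulVecLin := by
      refine ⟨Pi.single j 1, ?_⟩
      simp [Matrix.mulVecLin_apply]; rfl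
    obtain ⟨c, hc⟩ := h hmem
    exact ⟨c, hc⟩
  choose c hc using hc
  refine ⟨Matrix.of (fun i j => c j i), ?_⟩
  ext i j
  have := congrFun (hc j) i
  simpa [Matrix.mul_apply, Matrix.mulVec, dotProduct] using this

private lemma rank_eq_finrank_range' {k l : ℕ} (M : Matrix (Fin k) (Fin l) ℂ) :
    M.rank = Module.finrank ℂ (LinearMap.range M.mulVecLin) := rfl

variable {m n : ℕ} (A X : Matrix (Fin m) (Fin n) ℂ) (W : Matrix (Fin n) (Fin m) ℂ)

private lemma one_imp
    (h1 : A * W * X * W * A = A) (h2 : X * W * A * W * X = X)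
    (h3 : (X * W * A * W)ᴴ = X * W * A * W) :
    (W * A * W).rank = A.rank ∧
      LinearMap.range X.mulVecLin = LinearMap.range ((A * W)ᴴ).mulVecLin := by
  constructor
  · -- rank
    apply le_antisymm
    · exact (Matrix.rank_mul_le_left (W * A) W).trans (Matrix.rank_mul_le_right W A)
    · have e1 : (A * W * X) * (W * A) = A := by
        simp only [← Matrix.mul_assoc]; exact h1
      have e2 : (W * A * W) * (X * (W * A)) = W * A := by
        have := congrArg (fun M => W * M) h1
        simp only [← Matrix.mul_assoc] at this ⊢
        exact this
      calc A.rank = ((A * W * X) * (W * A)).rank := by rw [e1]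
        _ ≤ (W * A).rank := Matrix.rank_mul_le_right _ _
        _ = ((W * A * W) * (X * (W * A))).rank := by rw [e2]
        _ ≤ (W * A * W).rank := Matrix.rank_mul_le_left _ _
  · -- range
    apply le_antisymm
    · have hsplit : X * W * A * W = (X * W) * (A * W) := by
        rw [Matrix.mul_assoc]
      have hEH : (X * W * A * W)ᴴ = (A * W)ᴴ * (Wᴴ * Xᴴ) := by
        simp only [hsplit, Matrix.conjTranspose_mul]
      have key : (A * W)ᴴ * (Wᴴ * Xᴴ * X) = X := by
        have e : (X * W * A * W) * X = X := h2
        calc (A * W)ᴴ * (Wᴴ * Xᴴ * X) = ((A * W)ᴴ * (Wᴴ * Xᴴ)) * X := by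
              simp only [Matrix.mul_assoc]
          _ = (X * W * A * W)ᴴ * X := by rw [hEH]
          _ = (X * W * A * W) * X := by rw [h3]
          _ = X := e
      calc LinearMap.range X.mulVecLin
          = LinearMap.range ((A * W)ᴴ * (Wᴴ * Xᴴ * X)).mulVecLin := by rw [key]
        _ ≤ LinearMap.range ((A * W)ᴴ).mulVecLin := range_mul_le' _ _
    · have e : A * W * X * W * A * W = A * W := by
        have := congrArg (fun M => M * W) h1
        simpa using this
      have e2 : (A * W) * (X * W * A * W) = A * W := by
        simp only [← Matrix.mul_assoc]; exact e
      have key : X * (W * A * W * (A * W)ᴴ) = (A * W)ᴴ := by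
        calc X * (W * A * W * (A * W)ᴴ) = (X * W * A * W) * (A * W)ᴴ := by
              simp only [Matrix.mul_assoc]
          _ = (X * W * A * W)ᴴ * (A * W)ᴴ := by rw [h3]
          _ = (A * W)ᴴ := by rw [← Matrix.conjTranspose_mul, e2]
      calc LinearMap.range ((A * W)ᴴ).mulVecLin
          = LinearMap.range (X * (W * A * W * (A * W)ᴴ)).mulVecLin := by rw [key]
        _ ≤ LinearMap.range X.mulVecLin := range_mul_le' _ _

private lemma two_imp
    (hr : (W * A * W).rank = A.rank) (h2 : X * W * A * W * X = X)
    (hrg : LinearMap.range X.mulVecLin = LinearMap.range ((A * W)ᴴ).mulVecLin) :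
    A * W * X * W * A = A ∧ (X * W * A * W)ᴴ = X * W * A * W := by
  obtain ⟨V, hV⟩ : ∃ V, X * V = (A * W)ᴴ := exists_mul_eq_of_range_le' hrg.ge
  -- E := X*W*A*W; first show E * (A*W)ᴴ = (A*W)ᴴ
  have hEAWH : (X * W * A * W) * (A * W)ᴴ = (A * W)ᴴ := by
    calc (X * W * A * W) * (A * W)ᴴ = (X * W * A * W) * (X * V) := by rw [hV]
      _ = (X * W * A * W * X) * V := by simp only [Matrix.mul_assoc]
      _ = X * V := by rw [h2]
      _ = (A * W)ᴴ := hV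
  have hEH : (X * W * A * W)ᴴ = (A * W)ᴴ * (Wᴴ * Xᴴ) := by
    simp only [Matrix.conjTranspose_mul, Matrix.mul_assoc]
  have hEEH : (X * W * A * W) * (X * W * A * W)ᴴ = (X * W * A * W)ᴴ := by
    rw [hEH, ← Matrix.mul_assoc, hEAWH]
  have herm : (X * W * A * W)ᴴ = X * W * A * W := by
    have hsa : ((X * W * A * W) * (X * W * A * W)ᴴ)ᴴ
        = (X * W * A * W) * (X * W * A * W)ᴴ := by
      rw [Matrix.conjTranspose_mul, Matrix.conjTranspose_conjTranspose]
    rw [hEEH] at hsa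
    rw [Matrix.conjTranspose_conjTranspose] at hsa
    exact hsa.symm
  refine ⟨?_, herm⟩
  -- rank (A*W) = rank A
  have hrAW : (A * W).rank = A.rank := by
    apply le_antisymm (Matrix.rank_mul_le_left A W)
    calc A.rank = (W * A * W).rank := hr.symm
      _ = (W * (A * W)).rank := by rw [Matrix.mul_assoc]
      _ ≤ (A * W).rank := Matrix.rank_mul_le_right _ _
  have hrangeAW : LinearMap.range (A * W).mulVecLin = LinearMap.range A.mulVecLin := by
    apply Submodule.eq_of_le_of_finrank_le (range_mul_le' A W)
    rw [← rank_eq_finrank_range', ← rank_eq_finrank_range', hrAW]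
  obtain ⟨S, hS⟩ : ∃ S, (A * W) * S = A := exists_mul_eq_of_range_le' hrangeAW.ge
  have h6 : (A * W) * (X * W * A * W)ᴴ = A * W := by
    have := congrArg Matrix.conjTranspose hEAWH
    simpa [Matrix.conjTranspose_mul, Matrix.mul_assoc] using this
  have h7 : (A * W) * (X * W * A * W) = A * W := by rw [← herm]; exact h6
  calc A * W * X * W * A = A * W * X * W * ((A * W) * S) := by rw [hS]
    _ = ((A * W) * (X * W * A * W)) * S := by simp only [Matrix.mul_assoc]
    _ = (A * W) * S := by rw [h7]
    _ = A := hS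

private lemma three_imp
    (h1 : A * W * X * W * A = A)
    (hle : LinearMap.range X.mulVecLin ≤ LinearMap.range ((A * W)ᴴ).mulVecLin) :
    X * W * A * W * X = X ∧ (X * W * A * W)ᴴ = X * W * A * W := by
  obtain ⟨U, hU⟩ : ∃ U, (A * W)ᴴ * U = X := exists_mul_eq_of_range_le' hle
  have h7 : (A * W) * (X * W * A * W) = A * W := by
    have := congrArg (fun M => M * W) h1
    simp only [← Matrix.mul_assoc] at this ⊢
    exact this
  have hEHAWH : (X * W * A * W)ᴴ * (A * W)ᴴ = (A * W)ᴴ := by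
    have := congrArg Matrix.conjTranspose h7
    simpa [Matrix.conjTranspose_mul] using this
  have hEfact : X * W * A * W = (A * W)ᴴ * (U * (W * A * W)) := by
    rw [← hU]; simp only [Matrix.mul_assoc]
  have hEHE : (X * W * A * W)ᴴ * (X * W * A * W) = X * W * A * W := by
    calc (X * W * A * W)ᴴ * (X * W * A * W)
        = (X * W * A * W)ᴴ * ((A * W)ᴴ * (U * (W * A * W))) := by
          congr 1
      _ = ((X * W * A * W)ᴴ * (A * W)ᴴ) * (U * (W * A * W)) := by
          rw [← Matrix.mul_assoc]
      _ = (A * W)ᴴ * (U * (W * A * W)) := by rw [hEHAWH]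
      _ = X * W * A * W := hEfact.symm
  have herm : (X * W * A * W)ᴴ = X * W * A * W := by
    have hsa : ((X * W * A * W)ᴴ * (X * W * A * W))ᴴ
        = (X * W * A * W)ᴴ * (X * W * A * W) := by
      rw [Matrix.conjTranspose_mul, Matrix.conjTranspose_conjTranspose]
    rw [hEHE] at hsa
    exact hsa
  refine ⟨?_, herm⟩
  calc X * W * A * W * X = (X * W * A * W) * ((A * W)ᴴ * U) := by
        congr 1; exact hU.symm
    _ = (X * W * A * W)ᴴ * ((A * W)ᴴ * U) := by rw [herm]
    _ = ((X * W * A * W)ᴴ * (A * W)ᴴ) * U := by rw [← Matrix.mul_assoc]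
    _ = (A * W)ᴴ * U := by rw [hEHAWH]
    _ = X := hU

end aux

/-- characterizations of `{1',2',4'}`-inverses via rank, outer/inner
equations and column spaces. -/
theorem stmt5 (m n : ℕ) (A X : Matrix (Fin m) (Fin n) ℂ) (W : Matrix (Fin n) (Fin m) ℂ) :
    ((A * W * X * W * A = A ∧
        X * W * A * W * X = X ∧
        (X * W * A * W)ᴴ = X * W * A * W) ↔
      ((W * A * W).rank = A.rank ∧
        X * W * A * W * X = X ∧
        LinearMap.range X.mulVecLin = LinearMap.range ((A * W)ᴴ).mulVecLin)) ∧
    (((W * A * W).rank = A.rank ∧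
        X * W * A * W * X = X ∧
        LinearMap.range X.mulVecLin = LinearMap.range ((A * W)ᴴ).mulVecLin) ↔
      ((W * A * W).rank = A.rank ∧
        A * W * X * W * A = A ∧
        LinearMap.range X.mulVecLin = LinearMap.range ((A * W)ᴴ).mulVecLin)) := by
  constructor
  · constructor
    · rintro ⟨h1, h2, h3⟩
      obtain ⟨hr, hrg⟩ := one_imp A X W h1 h2 h3
      exact ⟨hr, h2, hrg⟩
    · rintro ⟨hr, h2, hrg⟩
      obtain ⟨h1, h3⟩ := two_imp A X W hr h2 hrg
      exact ⟨h1, h2, h3⟩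
  · constructor
    · rintro ⟨hr, h2, hrg⟩
      obtain ⟨h1, _⟩ := two_imp A X W hr h2 hrg
      exact ⟨hr, h1, hrg⟩
    · rintro ⟨hr, h1, hrg⟩
      obtain ⟨h2, _⟩ := three_imp A X W h1 hrg.le
      exact ⟨hr, h2, hrg⟩
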